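/- Let w be an element of the free group on x1,...,xn with exponent sums e_i of x_i and e_j of x_j. If w' is a conjugate of w, then the coefficient of h_i h_j in the Magnus expansion of w' is congruent to the coefficient of h_i h_j in the Magnus expansion of w, modulo the greatest common divisor of e_i and e_j. -/

import Mathlib

/-- The degree `≤ 2` truncation of the ring of formal power series in the
noncommuting variables `h 0, ..., h (n-1)` over `ℤ`: `c0` is the constant
coefficient, `c1 i` the coefficient of `h i`, and `c2 i j` the coefficient of
the monomial `h i * h j`. -/
structure Trunc2 (n : ℕ) where
  c0 : ℤ
  c1 : Fin n → ℤ
  c2 : Fin n → Fin n → ℤ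

namespace Trunc2

variable {n : ℕ}

@[ext] theorem ext {a b : Trunc2 n} (h0 : a.c0 = b.c0) (h1 : ∀ i, a.c1 i = b.c1 i)
    (h2 : ∀ i j, a.c2 i j = b.c2 i j) : a = b := by
  cases a; cases b
  simp only [mk.injEq]
  exact ⟨h0, funext h1, funext fun i => funext (h2 i)⟩

instance : One (Trunc2 n) := ⟨⟨1, 0, 0⟩⟩

/-- Multiplication of truncated noncommutative power series. -/
instance : Mul (Trunc2 n) :=
  ⟨fun a b => ⟨a.c0 * b.c0,
    fun i => a.c0 * b.c1 i + b.c0 * a.c1 i,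
    fun i j => a.c0 * b.c2 i j + b.c0 * a.c2 i j + a.c1 i * b.c1 j⟩⟩

@[simp] theorem one_c0 : (1 : Trunc2 n).c0 = 1 := rfl
@[simp] theorem one_c1 (i : Fin n) : (1 : Trunc2 n).c1 i = 0 := rfl
@[simp] theorem one_c2 (i j : Fin n) : (1 : Trunc2 n).c2 i j = 0 := rfl
@[simp] theorem mul_c0 (a b : Trunc2 n) : (a * b).c0 = a.c0 * b.c0 := rfl
@[simp] theorem mul_c1 (a b : Trunc2 n) (i : Fin n) :
    (a * b).c1 i = a.c0 * b.c1 i + b.c0 * a.c1 i := rfl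
@[simp] theorem mul_c2 (a b : Trunc2 n) (i j : Fin n) :
    (a * b).c2 i j = a.c0 * b.c2 i j + b.c0 * a.c2 i j + a.c1 i * b.c1 j := rfl

instance : Monoid (Trunc2 n) where
  mul_assoc a b c := by ext <;> simp <;> ring
  one_mul a := by ext <;> simp
  mul_one a := by ext <;> simp

/-- The (truncated) Magnus image `1 + h k` of the generator `x k`, together with
its inverse `1 - h k + h k * h k`. -/
def gen (k : Fin n) : (Trunc2 n)ˣ where
  val := ⟨1, (Pi.single k 1 : Fin n → ℤ), 0⟩
  inv := ⟨1, -(Pi.single k 1 : Fin n → ℤ),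
    fun i j => (Pi.single k 1 : Fin n → ℤ) i * (Pi.single k 1 : Fin n → ℤ) j⟩
  val_inv := by ext <;> simp
  inv_val := by ext <;> simp

/-- The Magnus expansion (truncated in degree `≤ 2`): the homomorphism from the
free group on `x 0, ..., x (n-1)` determined by `x k ↦ 1 + h k`
(so `(x k)⁻¹ ↦ 1 - h k + h k ^ 2 - ⋯`). -/
noncomputable def magnus : FreeGroup (Fin n) →* (Trunc2 n)ˣ := FreeGroup.lift gen

/-- The coefficient of `h i` in the Magnus expansion of `w`. -/
noncomputable def magnusCoeff1 (i : Fin n) (w : FreeGroup (Fin n)) : ℤ :=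
  ((magnus w : (Trunc2 n)ˣ) : Trunc2 n).c1 i

/-- The coefficient of the monomial `h i * h j` in the Magnus expansion of `w`. -/
noncomputable def magnusCoeff2 (i j : Fin n) (w : FreeGroup (Fin n)) : ℤ :=
  ((magnus w : (Trunc2 n)ˣ) : Trunc2 n).c2 i j

end Trunc2

open Trunc2 FreeGroup

/-- The exponent sum of the generator `x i` in a word of the free group,
i.e. the `i`-th coordinate of the image of the word under the abelianization
map to `ℤ^n`. -/
noncomputable def expSum {n : ℕ} (i : Fin n) : FreeGroup (Fin n) →* Multiplicative ℤ :=
  FreeGroup.lift (fun j => Multiplicative.ofAdd (if j = i then (1 : ℤ) else 0))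


section Aux
variable {n : ℕ}

@[simp] theorem magnus_pure (x : Fin n) : magnus (n := n) (pure x) = gen x :=
  FreeGroup.lift_apply_of

theorem magnus_c0 (w : FreeGroup (Fin n)) :
    ((magnus w : (Trunc2 n)ˣ) : Trunc2 n).c0 = 1 := by
  induction w using FreeGroup.induction_on with
  | C1 => simp
  | of x =>
      change ((magnus (pure x) : (Trunc2 n)ˣ) : Trunc2 n).c0 = 1
      simp [gen]
  | inv_of x _ =>
      have h := congrArg Trunc2.c0 (magnus (n := n) (pure x)).val_inv
      rw [mul_c0, one_c0] at h
      have h1 : ((magnus (n := n) (pure x) : (Trunc2 n)ˣ) : Trunc2 n).c0 = 1 := by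
        simp [gen]
      rw [h1, one_mul] at h
      rw [_root_.map_inv]
      exact h
  | mul x y hx hy => simp [mul_c0, hx, hy]

theorem inv_c0 (u : (Trunc2 n)ˣ) (h : (u : Trunc2 n).c0 = 1) :
    ((u⁻¹ : (Trunc2 n)ˣ) : Trunc2 n).c0 = 1 := by
  show u.inv.c0 = 1
  have := congrArg Trunc2.c0 u.val_inv
  rw [mul_c0, h, one_mul] at this
  exact this

theorem inv_c1 (u : (Trunc2 n)ˣ) (h : (u : Trunc2 n).c0 = 1) (i : Fin n) :
    ((u⁻¹ : (Trunc2 n)ˣ) : Trunc2 n).c1 i = -((u : Trunc2 n).c1 i) := by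
  have h0 : u.inv.c0 = 1 := inv_c0 u h
  show u.inv.c1 i = _
  have := congrArg (fun a => Trunc2.c1 a i) u.val_inv
  simp only [mul_c1, one_c1, h, h0, one_mul] at this
  linarith

theorem inv_c2 (u : (Trunc2 n)ˣ) (h : (u : Trunc2 n).c0 = 1) (i j : Fin n) :
    ((u⁻¹ : (Trunc2 n)ˣ) : Trunc2 n).c2 i j =
      -((u : Trunc2 n).c2 i j) + (u : Trunc2 n).c1 i * (u : Trunc2 n).c1 j := by
  have h0 : u.inv.c0 = 1 := inv_c0 u h
  have h1j : u.inv.c1 j = -((u : Trunc2 n).c1 j) := inv_c1 u h j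
  show u.inv.c2 i j = _
  have := congrArg (fun a => Trunc2.c2 a i j) u.val_inv
  simp only [mul_c2, one_c2, h, h0, one_mul, h1j] at this
  linarith

theorem magnus_c1 (i : Fin n) (w : FreeGroup (Fin n)) :
    ((magnus w : (Trunc2 n)ˣ) : Trunc2 n).c1 i = Multiplicative.toAdd (expSum i w) := by
  induction w using FreeGroup.induction_on with
  | C1 => simp
  | of x =>
      change ((magnus (pure x) : (Trunc2 n)ˣ) : Trunc2 n).c1 i = Multiplicative.toAdd (expSum i (pure x))
      rw [magnus_pure, show ((gen x : (Trunc2 n)ˣ) : Trunc2 n).c1 i = (Pi.single x 1 : Fin n → ℤ) i from rfl,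
        expSum]
      have h2 : FreeGroup.lift (fun j => Multiplicative.ofAdd (if j = i then (1 : ℤ) else 0))
          (pure x) = Multiplicative.ofAdd (if x = i then (1 : ℤ) else 0) := FreeGroup.lift_apply_of
      rw [h2]
      simp [Pi.single_apply, eq_comm]
  | inv_of x ih =>
      rw [_root_.map_inv, inv_c1 _ (magnus_c0 _), ih, _root_.map_inv]
      simp
  | mul x y hx hy =>
      simp only [_root_.map_mul, Units.val_mul, mul_c1, magnus_c0, one_mul, hx, hy, toAdd_mul]
      ring

end Aux

/-- if `w'` is conjugate to `w`, then the coefficient of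
`h i * h j` in the Magnus expansion of `w'` is congruent to that of `w`
modulo `gcd(e_i, e_j)`, where `e_i, e_j` are the exponent sums of `x i`
and `x j` in `w`. -/
theorem magnusCoeff2_conj_modEq {n : ℕ} (i j : Fin n)
    (w w' : FreeGroup (Fin n)) (h : ∃ g, w' = g * w * g⁻¹) :
    Int.ModEq
      (Int.gcd (Multiplicative.toAdd (expSum i w)) (Multiplicative.toAdd (expSum j w)) : ℤ)
      (magnusCoeff2 i j w') (magnusCoeff2 i j w) := by
  obtain ⟨g, rfl⟩ := h
  set ei : ℤ := Multiplicative.toAdd (expSum i w)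
  set ej : ℤ := Multiplicative.toAdd (expSum j w)
  have hg0 := magnus_c0 (n := n) g
  have hw0 := magnus_c0 (n := n) w
  have key : magnusCoeff2 i j (g * w * g⁻¹) - magnusCoeff2 i j w =
      ((magnus g : (Trunc2 n)ˣ) : Trunc2 n).c1 i * ej -
        ei * ((magnus g : (Trunc2 n)ˣ) : Trunc2 n).c1 j := by
    simp only [magnusCoeff2, _root_.map_mul, _root_.map_inv, Units.val_mul, mul_c2, mul_c1,
      inv_c0 _ hg0, inv_c1 _ hg0, inv_c2 _ hg0, mul_c0, hg0, hw0, one_mul,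
      magnus_c1 i w, magnus_c1 j w, ei, ej]
    ring
  have hdvd : (Int.gcd ei ej : ℤ) ∣
      magnusCoeff2 i j (g * w * g⁻¹) - magnusCoeff2 i j w := by
    rw [key]
    exact dvd_sub ((Int.gcd_dvd_right (a := ei) (b := ej)).mul_left _)
      ((Int.gcd_dvd_left (a := ei) (b := ej)).mul_right _)
  exact (Int.ModEq.symm (Int.modEq_iff_dvd.mpr hdvd))
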